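/- Let A be an integral FL-algebra, F ⊆ A a normal filter, and x ∈ A. Then the set F_x = {a ∈ A : ∃ f ∈ F and iterated conjugates α₁(x), …, αₙ(x) of x with f · α₁(x) ⋯ αₙ(x) ≤ a} is the smallest normal filter containing F ∪ {x}. -/

import Mathlib

/-- An integral FL-algebra: a residuated lattice with an extra constant `0`,
in which `1` is the top element. -/
class IntegralFL (α : Type*) extends Lattice α, Monoid α where
  ldiv : α → α → α
  rdiv : α → α → α
  zero : α
  le_ldiv_iff : ∀ x y z : α, y ≤ ldiv x z ↔ x * y ≤ z
  le_rdiv_iff : ∀ x y z : α, x ≤ rdiv z y ↔ x * y ≤ z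
  le_one : ∀ x : α, x ≤ 1

open IntegralFL

/-- One conjugation step: `(true, b)` acts as the left conjugate
`λ_b(y) = b \ (y·b)`, `(false, b)` as the right conjugate `ρ_b(y) = (b·y) / b`
(in the integral case, the meet with `1` is superfluous). -/
def conjStep {α : Type*} [IntegralFL α] (p : Bool × α) (y : α) : α :=
  if p.1 then ldiv p.2 (y * p.2) else rdiv (p.2 * y) p.2

/-- An iterated conjugate of `x`: the image of `x` under a conjugation
polynomial, encoded by a list of conjugation steps. -/
def iterConj {α : Type*} [IntegralFL α] (l : List (Bool × α)) (x : α) : α :=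
  l.foldr conjStep x

/-- A normal filter: a lattice filter containing `1`, closed under products and
under all left and right conjugates. -/
def IsNormalFilter {α : Type*} [IntegralFL α] (F : Set α) : Prop :=
  (1 : α) ∈ F ∧
  (∀ a b : α, a ∈ F → a ≤ b → b ∈ F) ∧
  (∀ a b : α, a ∈ F → b ∈ F → a ⊓ b ∈ F) ∧
  (∀ a b : α, a ∈ F → b ∈ F → a * b ∈ F) ∧
  (∀ a b : α, a ∈ F → ldiv b (a * b) ∈ F ∧ rdiv (b * a) b ∈ F)

section Aux
variable {α : Type*} [IntegralFL α]

lemma ifl_mul_le_mul_left (x : α) {y z : α} (h : y ≤ z) : x * y ≤ x * z :=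
  (le_ldiv_iff x y (x * z)).mp (h.trans ((le_ldiv_iff x z (x * z)).mpr le_rfl))

lemma ifl_mul_le_mul_right (x : α) {y z : α} (h : y ≤ z) : y * x ≤ z * x :=
  (le_rdiv_iff y x (z * x)).mp (h.trans ((le_rdiv_iff z x (z * x)).mpr le_rfl))

lemma ifl_mul_le_mul {a b c d : α} (h1 : a ≤ c) (h2 : b ≤ d) : a * b ≤ c * d :=
  (ifl_mul_le_mul_right b h1).trans (ifl_mul_le_mul_left c h2)

lemma ifl_mul_le_left (x y : α) : x * y ≤ x :=
  (ifl_mul_le_mul_left x (le_one y)).trans (le_of_eq (mul_one x))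

lemma ifl_mul_le_right (x y : α) : x * y ≤ y :=
  (ifl_mul_le_mul_right y (le_one x)).trans (le_of_eq (one_mul y))

lemma ifl_ldiv_cancel (b w : α) : b * ldiv b w ≤ w :=
  (le_ldiv_iff b (ldiv b w) w).mp le_rfl

lemma ifl_rdiv_cancel (b w : α) : rdiv w b * b ≤ w :=
  (le_rdiv_iff (rdiv w b) b w).mp le_rfl

lemma ifl_prod_le_one (L : List α) : L.prod ≤ 1 := by
  induction L with
  | nil => simp
  | cons y L ih => rw [List.prod_cons]; exact (ifl_mul_le_right y L.prod).trans ih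

/-- Key: move `b` leftwards past left conjugates. -/
lemma ifl_key_left (b : α) (L : List α) :
    b * (L.map (fun y => ldiv b (y * b))).prod ≤ L.prod * b := by
  induction L with
  | nil => simp
  | cons y L ih =>
      rw [List.map_cons, List.prod_cons, List.prod_cons]
      calc b * (ldiv b (y * b) * (L.map (fun y => ldiv b (y * b))).prod)
          = (b * ldiv b (y * b)) * (L.map (fun y => ldiv b (y * b))).prod := by
            rw [mul_assoc]
        _ ≤ (y * b) * (L.map (fun y => ldiv b (y * b))).prod :=
            ifl_mul_le_mul_right _ (ifl_ldiv_cancel b (y * b))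
        _ = y * (b * (L.map (fun y => ldiv b (y * b))).prod) := by rw [mul_assoc]
        _ ≤ y * (L.prod * b) := ifl_mul_le_mul_left y ih
        _ = y * L.prod * b := (mul_assoc _ _ _).symm

/-- Key: move `b` rightwards past right conjugates. -/
lemma ifl_key_right (b : α) (L : List α) :
    (L.map (fun y => rdiv (b * y) b)).prod * b ≤ b * L.prod := by
  induction L with
  | nil => simp
  | cons y L ih =>
      rw [List.map_cons, List.prod_cons, List.prod_cons]
      calc (rdiv (b * y) b * (L.map (fun y => rdiv (b * y) b)).prod) * b
          = rdiv (b * y) b * ((L.map (fun y => rdiv (b * y) b)).prod * b) := by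
            rw [mul_assoc]
        _ ≤ rdiv (b * y) b * (b * L.prod) := ifl_mul_le_mul_left _ ih
        _ = (rdiv (b * y) b * b) * L.prod := by rw [mul_assoc]
        _ ≤ (b * y) * L.prod := ifl_mul_le_mul_right _ (ifl_rdiv_cancel b (b * y))
        _ = b * (y * L.prod) := by rw [mul_assoc]

lemma ifl_iterConj_mem {G : Set α} (hG : IsNormalFilter G) {x : α} (hx : x ∈ G)
    (l : List (Bool × α)) : iterConj l x ∈ G := by
  induction l with
  | nil => exact hx
  | cons p l ih =>
      show conjStep p (iterConj l x) ∈ G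
      unfold conjStep
      rcases p with ⟨b, c⟩
      cases b with
      | true => simpa using (hG.2.2.2.2 (iterConj l x) c ih).1
      | false => simpa using (hG.2.2.2.2 (iterConj l x) c ih).2

lemma ifl_prod_mem {G : Set α} (hG : IsNormalFilter G) {L : List α}
    (h : ∀ y ∈ L, y ∈ G) : L.prod ∈ G := by
  induction L with
  | nil => simpa using hG.1
  | cons y L ih =>
      rw [List.prod_cons]
      exact hG.2.2.2.1 y L.prod (h y List.mem_cons_self)
        (ih fun z hz => h z (List.mem_cons_of_mem y hz))

end Aux

/-- For a normal filter `F` and an element `x` of an integral FL-algebra, the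
set `F_x = {a : ∃ f ∈ F, ∃ iterated conjugates α₁(x),…,αₙ(x),
f·α₁(x)⋯αₙ(x) ≤ a}` is the smallest normal filter containing `F ∪ {x}`. -/
theorem stmt14 {α : Type*} [IntegralFL α] (F : Set α) (hF : IsNormalFilter F) (x : α) :
    let Fx : Set α := {a : α | ∃ f ∈ F, ∃ ls : List (List (Bool × α)),
      f * (ls.map (fun l => iterConj l x)).prod ≤ a}
    IsNormalFilter Fx ∧ F ⊆ Fx ∧ x ∈ Fx ∧
      ∀ G : Set α, IsNormalFilter G → F ⊆ G → x ∈ G → Fx ⊆ G := by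
  intro Fx
  obtain ⟨h1, hup, hmeet, hmul, hconj⟩ := hF
  have hmapT : ∀ (g : α) (ps : List (List (Bool × α))),
      List.map (fun l => iterConj l x) (List.map (fun l => (true, g) :: l) ps)
      = List.map (fun y => ldiv g (y * g)) (List.map (fun l => iterConj l x) ps) := by
    intro g ps
    simp only [List.map_map]
    rfl
  have hmapF : ∀ (g : α) (ps : List (List (Bool × α))),
      List.map (fun l => iterConj l x) (List.map (fun l => (false, g) :: l) ps)
      = List.map (fun y => rdiv (g * y) g) (List.map (fun l => iterConj l x) ps) := by
    intro g ps
    simp only [List.map_map]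
    rfl
  have key : ∀ (f g a b : α) (ps qs : List (List (Bool × α))),
      f * (List.map (fun l => iterConj l x) ps).prod ≤ a →
      g * (List.map (fun l => iterConj l x) qs).prod ≤ b →
      (f * g) * (List.map (fun l => iterConj l x)
        (List.map (fun l => (true, g) :: l) ps ++ qs)).prod ≤ a * b := by
    intro f g a b ps qs ha hb
    set P := (List.map (fun l => iterConj l x) ps).prod with hP
    set Q := (List.map (fun l => iterConj l x) qs).prod with hQ
    rw [List.map_append, List.prod_append, hmapT]
    calc (f * g) * ((List.map (fun y => ldiv g (y * g))
            (List.map (fun l => iterConj l x) ps)).prod * Q)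
        = f * ((g * (List.map (fun y => ldiv g (y * g))
            (List.map (fun l => iterConj l x) ps)).prod) * Q) := by simp only [mul_assoc]
      _ ≤ f * ((P * g) * Q) :=
          ifl_mul_le_mul_left f (ifl_mul_le_mul_right Q (ifl_key_left g _))
      _ = (f * P) * (g * Q) := by simp only [mul_assoc]
      _ ≤ a * b := ifl_mul_le_mul ha hb
  refine ⟨⟨⟨1, h1, [], by simp⟩, ?_, ?_, ?_, ?_⟩, ?_, ?_, ?_⟩
  · rintro a b ⟨f, hf, ls, hle⟩ hab
    exact ⟨f, hf, ls, hle.trans hab⟩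
  · rintro a b ⟨f, hf, ps, ha⟩ ⟨g, hg, qs, hb⟩
    refine ⟨f * g, hmul f g hf hg, List.map (fun l => (true, g) :: l) ps ++ qs,
      le_inf ?_ ?_⟩
    · have := key f g a 1 ps qs ha ((ifl_mul_le_left g _).trans (le_one g))
      simpa using this
    · rw [List.map_append, List.prod_append, hmapT]
      set Q := (List.map (fun l => iterConj l x) qs).prod with hQ
      calc (f * g) * ((List.map (fun y => ldiv g (y * g))
              (List.map (fun l => iterConj l x) ps)).prod * Q)
          ≤ (f * g) * (1 * Q) := ifl_mul_le_mul_left _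
            (ifl_mul_le_mul_right Q (ifl_prod_le_one _))
        _ = f * (g * Q) := by simp only [one_mul, mul_assoc]
        _ ≤ 1 * (g * Q) := ifl_mul_le_mul_right _ (le_one f)
        _ = g * Q := one_mul _
        _ ≤ b := hb
  · rintro a b ⟨f, hf, ps, ha⟩ ⟨g, hg, qs, hb⟩
    exact ⟨f * g, hmul f g hf hg, List.map (fun l => (true, g) :: l) ps ++ qs,
      key f g a b ps qs ha hb⟩
  · rintro a b ⟨f, hf, ps, ha⟩
    set P := (List.map (fun l => iterConj l x) ps).prod with hP
    constructor
    · refine ⟨ldiv b (f * b), (hconj f b hf).1, List.map (fun l => (true, b) :: l) ps, ?_⟩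
      rw [hmapT]
      refine (le_ldiv_iff b _ (a * b)).mpr ?_
      calc b * (ldiv b (f * b) * (List.map (fun y => ldiv b (y * b))
              (List.map (fun l => iterConj l x) ps)).prod)
          = (b * ldiv b (f * b)) * (List.map (fun y => ldiv b (y * b))
              (List.map (fun l => iterConj l x) ps)).prod := by simp only [mul_assoc]
        _ ≤ (f * b) * (List.map (fun y => ldiv b (y * b))
              (List.map (fun l => iterConj l x) ps)).prod :=
            ifl_mul_le_mul_right _ (ifl_ldiv_cancel b (f * b))
        _ = f * (b * (List.map (fun y => ldiv b (y * b))
              (List.map (fun l => iterConj l x) ps)).prod) := by simp only [mul_assoc]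
        _ ≤ f * (P * b) := ifl_mul_le_mul_left f (ifl_key_left b _)
        _ = (f * P) * b := by simp only [mul_assoc]
        _ ≤ a * b := ifl_mul_le_mul_right b ha
    · refine ⟨rdiv (b * f) b, (hconj f b hf).2, List.map (fun l => (false, b) :: l) ps, ?_⟩
      rw [hmapF]
      refine (le_rdiv_iff _ b (b * a)).mpr ?_
      calc (rdiv (b * f) b * (List.map (fun y => rdiv (b * y) b)
              (List.map (fun l => iterConj l x) ps)).prod) * b
          = rdiv (b * f) b * ((List.map (fun y => rdiv (b * y) b)
              (List.map (fun l => iterConj l x) ps)).prod * b) := by simp only [mul_assoc]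
        _ ≤ rdiv (b * f) b * (b * P) := ifl_mul_le_mul_left _ (ifl_key_right b _)
        _ = (rdiv (b * f) b * b) * P := by simp only [mul_assoc]
        _ ≤ (b * f) * P := ifl_mul_le_mul_right P (ifl_rdiv_cancel b (b * f))
        _ = b * (f * P) := by simp only [mul_assoc]
        _ ≤ b * a := ifl_mul_le_mul_left b ha
  · intro a ha
    exact ⟨a, ha, [], by simp⟩
  · exact ⟨1, h1, [[]], by simp [iterConj]⟩
  · rintro G hG hFG hxG a ⟨f, hf, ls, hle⟩
    refine hG.2.1 _ a (hG.2.2.2.1 f _ (hFG hf) (ifl_prod_mem hG ?_)) hle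
    intro y hy
    obtain ⟨l, -, rfl⟩ := List.mem_map.mp hy
    exact ifl_iterConj_mem hG hxG l
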